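/- The binary word p = 10 does not have an internal zero at any n ≥ 0; equivalently, for every n and every k with 0 ≤ k ≤ M_{n,10}, there exists a binary word of length n with exactly k occurrences of 10. -/
import Mathlib


/-- `occ p w` is the number of occurrences of `p` as a subsequence of `w`,
i.e. the number of choices of indices `i₁ < ⋯ < i_l` in `w` matching `p`. -/
def occ (p w : List Bool) : ℕ := w.sublists.count p

/-- `B n p k` is the number of binary words of length `n` with exactly `k` occurrences of `p`. -/
noncomputable def B (n : ℕ) (p : List Bool) (k : ℕ) : ℕ :=
  Nat.card {w : List Bool // w.length = n ∧ occ p w = k}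

/-- The list of runs (maximal blocks of consecutive equal letters) of a binary word. -/
def runs (p : List Bool) : List (List Bool) := p.splitBy (· == ·)

/-- The number of runs of a binary word. -/
def numRuns (p : List Bool) : ℕ := (runs p).length

/-- The number of runs of size `i` of a binary word. -/
def numRunsOfSize (p : List Bool) (i : ℕ) : ℕ := ((runs p).map List.length).count i

/-- `maxOcc n p` is the maximum number of occurrences of `p` among binary words of length `n`. -/
noncomputable def maxOcc (n : ℕ) (p : List Bool) : ℕ :=
  sSup {k | ∃ w : List Bool, w.length = n ∧ occ p w = k}

/-- `p` has an internal zero at `n` if the sequence `(B n p k)_{k ≥ 0}` has an internal zero. -/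
def HasInternalZeroAt (p : List Bool) (n : ℕ) : Prop :=
  ∃ k₁ k₂ k₃ : ℕ, k₁ < k₂ ∧ k₂ < k₃ ∧ B n p k₁ ≠ 0 ∧ B n p k₂ = 0 ∧ B n p k₃ ≠ 0

lemma flat_count (l : List (List Bool)) (p : List Bool) (a : Bool) :
    (l.flatMap fun x => [x, a::x]).count p
      = l.count p + l.countP (fun x => a :: x == p) := by
  induction l with
  | nil => simp
  | cons y l ih =>
      simp only [List.flatMap_cons, List.count_append, List.count_cons, List.countP_cons, ih]
      by_cases h1 : y = p <;> by_cases h2 : a :: y = p <;> simp [h1, h2] <;> omega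

lemma occ_cons (p : List Bool) (a : Bool) (w : List Bool) :
    occ p (a :: w) = occ p w + w.sublists.countP (fun x => a :: x == p) := by
  unfold occ
  rw [List.sublists_cons]
  exact flat_count _ _ _

lemma occ_empty (w : List Bool) : occ [] w = 1 := by
  induction w with
  | nil => rfl
  | cons a w ih => rw [occ_cons, ih]; simp

lemma occ_false (w : List Bool) : occ [false] w = w.count false := by
  induction w with
  | nil => rfl
  | cons a w ih =>
      rw [occ_cons, ih, List.count_cons]
      cases a with
      | false =>
          have : (fun x : List Bool => false :: x == [false]) = (fun x => x == []) := by
            funext x; cases x <;> simp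
          rw [this]
          have h2 : w.sublists.countP (fun x => x == []) = w.sublists.count [] := by
            simp [List.count]
          rw [h2]
          have := occ_empty w
          unfold occ at this
          simp [this]
      | true => simp

lemma occ10_cons (a : Bool) (w : List Bool) :
    occ [true, false] (a :: w) = occ [true, false] w + if a then w.count false else 0 := by
  rw [occ_cons]
  cases a with
  | false => simp
  | true =>
      have : (fun x : List Bool => true :: x == [true, false]) = (fun x => x == [false]) := by
        funext x; cases x <;> simp
      rw [this]
      have h2 : w.sublists.countP (fun x => x == [false]) = w.sublists.count [false] := by
        simp [List.count]
      rw [h2]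
      have := occ_false w
      unfold occ at this
      simp [this]

lemma occ10_append (w v : List Bool) :
    occ [true, false] (w ++ v)
      = occ [true, false] w + occ [true, false] v + w.count true * v.count false := by
  induction w with
  | nil => simp [occ, List.sublists]
  | cons a w ih =>
      rw [List.cons_append, occ10_cons, occ10_cons, ih, List.count_append, List.count_cons]
      cases a <;> simp <;> ring

lemma occ10_replicate (m : ℕ) (b : Bool) : occ [true, false] (List.replicate m b) = 0 := by
  induction m with
  | zero => rfl
  | succ m ih =>
      rw [List.replicate_succ, occ10_cons, ih, List.count_replicate]
      cases b <;> simp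

lemma occ10_le (w : List Bool) : occ [true, false] w ≤ w.count true * w.count false := by
  induction w with
  | nil => simp [occ, List.sublists]
  | cons a w ih =>
      rw [occ10_cons]
      cases a <;> simp [List.count_cons] <;> nlinarith

lemma count_true_add_false (w : List Bool) : w.count true + w.count false = w.length := by
  induction w with
  | nil => rfl
  | cons a w ih => cases a <;> simp [List.count_cons] <;> omega

lemma prod_le_aux (a b n : ℕ) (h : a + b = n) (hab : a ≤ b) :
    a * b ≤ (n / 2) * (n - n / 2) := by
  set m := n / 2 with hm
  set e := n - m with he
  have ham : a ≤ m := by omega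
  have hme : m ≤ e := by omega
  have hb : b = e + (m - a) := by omega
  set d := m - a with hd
  calc a * b = a * e + a * d := by rw [hb]; ring
    _ ≤ a * e + d * e := by
        have : a * d ≤ d * e := by
          calc a * d = d * a := by ring
            _ ≤ d * e := Nat.mul_le_mul_left d (le_trans ham hme)
        omega
    _ = (a + d) * e := by ring
    _ = m * e := by congr 1; omega

lemma prod_le (a b n : ℕ) (h : a + b = n) : a * b ≤ (n / 2) * (n - n / 2) := by
  rcases le_total a b with hab | hab
  · exact prod_le_aux a b n h hab
  · rw [Nat.mul_comm]; exact prod_le_aux b a n (by omega) hab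

lemma occ10_bound (w : List Bool) :
    occ [true, false] w ≤ (w.length / 2) * (w.length - w.length / 2) :=
  le_trans (occ10_le w) (prod_le _ _ _ (count_true_add_false w))

lemma exists_word (n k : ℕ) (hk : k ≤ (n / 2) * (n - n / 2)) :
    ∃ w : List Bool, w.length = n ∧ occ [true, false] w = k := by
  set a := n / 2 with ha
  set b := n - a with hb
  by_cases hb0 : b = 0
  · have hn : n = 0 := by omega
    have hk0 : k = 0 := by
      have : a * b = 0 := by rw [hb0]; ring
      omega
    exact ⟨[], by simp [hn, hk0]; rfl⟩
  by_cases hke : k = a * b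
  · refine ⟨List.replicate a true ++ List.replicate b false, ?_, ?_⟩
    · simp; omega
    · rw [occ10_append, occ10_replicate, occ10_replicate, List.count_replicate,
        List.count_replicate]
      simp [hke]
  · have hklt : k < a * b := lt_of_le_of_ne hk hke
    set q := k / b with hq
    set r := k % b with hr
    have hrb : r < b := Nat.mod_lt _ (by omega)
    have hqa : q < a := by
      rw [hq, Nat.div_lt_iff_lt_mul (by omega : 0 < b)]
      exact hklt
    refine ⟨List.replicate q true ++ (List.replicate (b - r) false ++
      ([true] ++ (List.replicate r false ++ List.replicate (a - q - 1) true))), ?_, ?_⟩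
    · simp; omega
    · rw [occ10_append, occ10_append, occ10_append, occ10_append]
      rw [occ10_replicate, occ10_replicate, occ10_replicate, occ10_replicate]
      simp only [List.count_append, List.count_replicate, List.count_cons, List.count_nil]
      norm_num
      have hmod : b * q + r = k := Nat.div_add_mod k b
      rw [show occ [true, false] [true] = 0 from rfl, show b - r + r = b by omega,
        mul_comm q b]
      linarith

theorem word10_no_internalZero :
    (∀ n : ℕ, ¬ HasInternalZeroAt [true, false] n) ∧
    (∀ n k : ℕ, k ≤ maxOcc n [true, false] →
      ∃ w : List Bool, w.length = n ∧ occ [true, false] w = k) := by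
  unfold HasInternalZeroAt maxOcc
  have hfin : ∀ n k : ℕ, Finite {w : List Bool // w.length = n ∧ occ [true, false] w = k} := by
    intro n k
    have h : {w : List Bool | w.length = n ∧ occ [true, false] w = k}.Finite :=
      (List.finite_length_eq Bool n).subset (fun w hw => hw.1)
    exact h.to_subtype
  have hBne : ∀ n k : ℕ, B n [true, false] k ≠ 0 ↔
      ∃ w : List Bool, w.length = n ∧ occ [true, false] w = k := by
    intro n k
    rw [B, Nat.card_ne_zero]
    constructor
    · rintro ⟨⟨⟨w, hw⟩⟩, -⟩; exact ⟨w, hw⟩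
    · rintro ⟨w, hw⟩; exact ⟨⟨⟨w, hw⟩⟩, hfin n k⟩
  have hbdd : ∀ n : ℕ, BddAbove {k | ∃ w : List Bool, w.length = n ∧ occ [true, false] w = k} := by
    intro n
    refine ⟨(n / 2) * (n - n / 2), ?_⟩
    rintro k ⟨w, hw, rfl⟩
    rw [← hw]
    exact occ10_bound w
  have hach : ∀ n k : ℕ, k ≤ maxOcc n [true, false] →
      ∃ w : List Bool, w.length = n ∧ occ [true, false] w = k := by
    intro n k hk
    refine exists_word n k (le_trans hk ?_)
    refine csSup_le ⟨0, List.replicate n false, by simp, by rw [occ10_replicate]⟩ ?_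
    rintro b ⟨w, hw, rfl⟩
    rw [← hw]
    exact occ10_bound w
  refine ⟨?_, hach⟩
  rintro n ⟨k₁, k₂, k₃, h12, h23, hB1, hB2, hB3⟩
  obtain ⟨w, hw, ho⟩ := (hBne n k₃).mp hB3
  have hk3 : k₃ ≤ maxOcc n [true, false] := le_csSup (hbdd n) ⟨w, hw, ho⟩
  exact (hBne n k₂).mpr (hach n k₂ (le_trans (le_of_lt h23) hk3)) hB2
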